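/- If C ⊆ F_3^n is a linear m-trifferent code and x, y ∈ C are nonzero codewords, then for every set D of m−1 coordinates, the support of x restricted to [n]\D is not strictly contained in the support of y restricted to [n]\D. (Forward direction of the equivalence between m-trifferent and m-minimal linear codes; proved by considering the codewords x, y, and −x.) -/
import Mathlib


/-- Three words in `F_3^n` triffer at position `i` if their `i`-th coordinates are
the three distinct elements of `F_3`. -/
def TriffersZ {n : ℕ} (a b c : Fin n → ZMod 3) (i : Fin n) : Prop :=
  ({a i, b i, c i} : Finset (ZMod 3)) = Finset.univ

instance {n : ℕ} (a b c : Fin n → ZMod 3) (i : Fin n) : Decidable (TriffersZ a b c i) := by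
  unfold TriffersZ; infer_instance

/-- A set of words is `m`-trifferent if every three distinct elements triffer in
at least `m` positions. -/
def IsTrifferentSet {n : ℕ} (m : ℕ) (S : Set (Fin n → ZMod 3)) : Prop :=
  ∀ x ∈ S, ∀ y ∈ S, ∀ z ∈ S, x ≠ y → x ≠ z → y ≠ z →
    m ≤ (Finset.univ.filter fun i => TriffersZ x y z i).card

theorem stmt15 (n m : ℕ) (hm : 1 ≤ m) (C : Submodule (ZMod 3) (Fin n → ZMod 3))
    (htr : IsTrifferentSet m (C : Set (Fin n → ZMod 3)))
    (x y : Fin n → ZMod 3) (hx : x ∈ C) (hy : y ∈ C) (hx0 : x ≠ 0) (hy0 : y ≠ 0)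
    (D : Finset (Fin n)) (hD : D.card = m - 1) :
    ¬ (Finset.univ.filter fun i => i ∉ D ∧ x i ≠ 0) ⊂
      (Finset.univ.filter fun i => i ∉ D ∧ y i ≠ 0) := by
  intro hss
  -- x = y and y = -x lead to equal supports, contradicting strictness
  have hxy : x ≠ y := by
    rintro rfl
    exact hss.ne rfl
  have hyx : y ≠ -x := by
    rintro rfl
    refine hss.ne ?_
    ext i
    simp only [Finset.mem_filter, Finset.mem_univ, true_and]
    constructor
    · rintro ⟨h1, h2⟩; exact ⟨h1, fun h => h2 (by simpa using neg_eq_zero.mp h)⟩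
    · rintro ⟨h1, h2⟩; exact ⟨h1, fun h => h2 (by simp [h])⟩
  have hxnx : x ≠ -x := by
    intro h
    apply hx0
    funext i
    have hi := congrFun h i
    simp only [Pi.neg_apply, Pi.zero_apply] at hi ⊢
    revert hi; generalize x i = a; revert a; decide
  have key := htr x hx y hy (-x) (neg_mem hx) hxy hxnx hyx
  have hsub : (Finset.univ.filter fun i => TriffersZ x y (-x) i) ⊆ D := by
    intro i hi
    simp only [Finset.mem_filter, Finset.mem_univ, true_and] at hi
    have hxi : x i ≠ 0 ∧ y i = 0 := by
      unfold TriffersZ at hi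
      simp only [Pi.neg_apply] at hi
      revert hi
      generalize x i = a; generalize y i = b
      revert a b; decide
    by_contra hiD
    have := hss.subset (Finset.mem_filter.mpr ⟨Finset.mem_univ i, hiD, hxi.1⟩)
    simp only [Finset.mem_filter, Finset.mem_univ, true_and] at this
    exact this.2 hxi.2
  have := Finset.card_le_card hsub
  omega
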